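/- Let f₀ be a bounded continuous density on ℝ^d and let f₁ be the uniform density on a bounded measurable set containing the support region of interest, with f₁ constant equal to c > 0 there. Then for points x, x' in this region with f₀(x), f₀(x') > 0 and f₁(x) = f₁(x') = c, the statistic d·(log g_k^N(x) − log g_k^N(x')) converges in probability to log f₀(x') − log f₀(x) as N → ∞ (with k/N → 0, k → ∞), and if f₀(x') = c this limit equals log(f₁(x)/f₀(x)). -/

import Mathlib

open MeasureTheory ProbabilityTheory Filter Topology Metric

/-- The `k`-th nearest neighbor distance of `x` among the points `X 0, ..., X (N-1)`. -/
noncomputable def knnDist {α : Type*} [PseudoMetricSpace α] (k N : ℕ) (x : α)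
    (X : ℕ → α) : ℝ :=
  sInf {r : ℝ | 0 ≤ r ∧ k ≤ ((Finset.range N).filter (fun i => dist x (X i) ≤ r)).card}

section comb
variable {α : Type*} [PseudoMetricSpace α] (k N : ℕ) (y : α) (Xs : ℕ → α)

lemma count_mono {r s : ℝ} (h : r ≤ s) :
    ((Finset.range N).filter (fun i => dist y (Xs i) ≤ r)).card ≤
      ((Finset.range N).filter (fun i => dist y (Xs i) ≤ s)).card :=
  Finset.card_le_card (by
    intro i hi
    rw [Finset.mem_filter] at hi ⊢
    exact ⟨hi.1, hi.2.trans h⟩)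

lemma knn_set_nonempty (hk : k ≤ N) :
    {r : ℝ | 0 ≤ r ∧ k ≤ ((Finset.range N).filter (fun i => dist y (Xs i) ≤ r)).card}.Nonempty := by
  refine ⟨∑ i ∈ Finset.range N, dist y (Xs i), Finset.sum_nonneg (fun i _ => dist_nonneg), ?_⟩
  have : (Finset.range N).filter (fun i => dist y (Xs i) ≤ ∑ j ∈ Finset.range N, dist y (Xs j))
      = Finset.range N := by
    refine Finset.filter_true_of_mem (fun i hi => ?_)
    exact Finset.single_le_sum (fun j _ => dist_nonneg) hi
  rw [this, Finset.card_range]; exact hk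

lemma knn_mem (hk : k ≤ N) :
    0 ≤ knnDist k N y Xs ∧
    k ≤ ((Finset.range N).filter (fun i => dist y (Xs i) ≤ knnDist k N y Xs)).card := by
  unfold knnDist
  set S := {r : ℝ | 0 ≤ r ∧ k ≤ ((Finset.range N).filter (fun i => dist y (Xs i) ≤ r)).card}
  have hne : S.Nonempty := knn_set_nonempty k N y Xs hk
  have hbdd : BddBelow S := ⟨0, fun s hs => hs.1⟩
  have ha0 : 0 ≤ sInf S := le_csInf hne (fun b hb => hb.1)
  refine ⟨ha0, ?_⟩
  by_cases hF : ∃ i ∈ Finset.range N, sInf S < dist y (Xs i)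
  · set F := (Finset.range N).filter (fun i => sInf S < dist y (Xs i)) with hFdef
    have hFne : F.Nonempty := by
      obtain ⟨i, hi, hlt⟩ := hF
      exact ⟨i, Finset.mem_filter.2 ⟨hi, hlt⟩⟩
    set m := F.inf' hFne (fun i => dist y (Xs i)) with hm
    have ham : sInf S < m := by
      rw [hm, Finset.lt_inf'_iff]
      exact fun i hi => (Finset.mem_filter.1 hi).2
    obtain ⟨s, hsS, hsm⟩ := exists_lt_of_csInf_lt hne ham
    have hsub : (Finset.range N).filter (fun i => dist y (Xs i) ≤ s) ⊆
        (Finset.range N).filter (fun i => dist y (Xs i) ≤ sInf S) := by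
      intro i hi
      rw [Finset.mem_filter] at hi ⊢
      refine ⟨hi.1, ?_⟩
      by_contra hgt
      push_neg at hgt
      have : i ∈ F := Finset.mem_filter.2 ⟨hi.1, hgt⟩
      have : m ≤ dist y (Xs i) := Finset.inf'_le _ this
      linarith [hi.2]
    exact le_trans hsS.2 (Finset.card_le_card hsub)
  · push_neg at hF
    have : (Finset.range N).filter (fun i => dist y (Xs i) ≤ sInf S) = Finset.range N :=
      Finset.filter_true_of_mem (fun i hi => hF i hi)
    rw [this, Finset.card_range]; exact hk

lemma knnDist_le_iff (hk : k ≤ N) {r : ℝ} (hr : 0 ≤ r) :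
    knnDist k N y Xs ≤ r ↔
      k ≤ ((Finset.range N).filter (fun i => dist y (Xs i) ≤ r)).card := by
  constructor
  · intro h
    exact le_trans (knn_mem k N y Xs hk).2 (count_mono N y Xs h)
  · intro h
    exact csInf_le ⟨0, fun s hs => hs.1⟩ ⟨hr, h⟩

end comb


lemma cheb_indicator {Ω β : Type*} [MeasurableSpace Ω] [MeasurableSpace β]
    (P : Measure Ω) [IsProbabilityMeasure P]
    (X : ℕ → Ω → β) (hmeas : ∀ i, Measurable (X i))
    (hindep : iIndepFun X P)
    (μ₀ : Measure β) (hdist : ∀ i, P.map (X i) = μ₀)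
    (s : Set β) (hs : MeasurableSet s) (N : ℕ) {t : ℝ} (ht : 0 < t) :
    P {ω | t ≤ |(∑ i ∈ Finset.range N, s.indicator (fun _ => (1:ℝ)) (X i ω))
        - N * (μ₀ s).toReal|}
      ≤ ENNReal.ofReal (N * (μ₀ s).toReal / t^2) := by
  set g : β → ℝ := s.indicator (fun _ => (1:ℝ)) with hg
  have hgmeas : Measurable g := measurable_const.indicator hs
  set B : ℕ → Ω → ℝ := fun i ω => g (X i ω) with hB
  have hBmeas : ∀ i, Measurable (B i) := fun i => hgmeas.comp (hmeas i)
  have hBbd : ∀ i ω, ‖B i ω‖ ≤ 1 := by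
    intro i ω
    by_cases h : X i ω ∈ s <;> simp [hB, hg, Set.indicator_apply, h]
  have hBL2 : ∀ i, MemLp (B i) 2 P := fun i =>
    MemLp.of_bound (hBmeas i).aestronglyMeasurable 1 (Filter.Eventually.of_forall (hBbd i))
  have hEB : ∀ i, P[B i] = (μ₀ s).toReal := by
    intro i
    have h1 : ∫ ω, g (X i ω) ∂P = ∫ z, g z ∂(P.map (X i)) := by
      rw [integral_map (hmeas i).aemeasurable hgmeas.aestronglyMeasurable]
    rw [hB]
    simp only []
    rw [h1, hdist i, hg, integral_indicator_const (1:ℝ) hs, smul_eq_mul, mul_one]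
    rfl
  have hB2 : ∀ i, (B i) ^ 2 = B i := by
    intro i
    funext ω
    by_cases h : X i ω ∈ s <;> simp [hB, hg, Set.indicator_apply, h]
  have hVarB : ∀ i, variance (B i) P ≤ (μ₀ s).toReal := by
    intro i
    rw [variance_eq_sub (hBL2 i), hB2 i, hEB i]
    exact sub_le_self _ (sq_nonneg _)
  have hindB : iIndepFun B P := by
    have := hindep.comp (fun _ => g) (fun _ => hgmeas)
    exact this
  set S : Ω → ℝ := ∑ i ∈ Finset.range N, B i with hS
  have hSL2 : MemLp S 2 P := memLp_finset_sum' _ (fun i _ => hBL2 i)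
  have hES : P[S] = N * (μ₀ s).toReal := by
    rw [hS]
    simp only [Finset.sum_apply]
    rw [integral_finset_sum _ (fun i _ => (hBL2 i).integrable one_le_two)]
    simp [hEB, Finset.sum_const]
  have hVarS : variance S P ≤ N * (μ₀ s).toReal := by
    rw [hS, IndepFun.variance_sum (fun i _ => hBL2 i)
      (fun i _ j _ hij => hindB.indepFun hij)]
    calc ∑ i ∈ Finset.range N, variance (B i) P
        ≤ ∑ _i ∈ Finset.range N, (μ₀ s).toReal := Finset.sum_le_sum (fun i _ => hVarB i)
      _ = N * (μ₀ s).toReal := by simp [mul_comm]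
  have hcheb := meas_ge_le_variance_div_sq hSL2 ht
  rw [hES] at hcheb
  have hset : {ω | t ≤ |(∑ i ∈ Finset.range N, g (X i ω)) - N * (μ₀ s).toReal|}
      = {ω | t ≤ |S ω - N * (μ₀ s).toReal|} := by
    ext ω
    simp [hS, hB, Finset.sum_apply]
  rw [hset]
  refine le_trans hcheb (ENNReal.ofReal_le_ofReal ?_)
  have ht2 : (0:ℝ) < t^2 := by positivity
  exact div_le_div_of_nonneg_right hVarS ht2.le


noncomputable def Vb (d : ℕ) : ℝ :=
  (MeasureTheory.volume (Metric.ball (0 : EuclideanSpace ℝ (Fin d)) 1)).toReal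

lemma Vb_pos {d : ℕ} (hd : 1 ≤ d) : 0 < Vb d := by
  haveI : Nonempty (Fin d) := ⟨⟨0, hd⟩⟩
  exact ENNReal.toReal_pos (measure_ball_pos _ _ one_pos).ne' measure_ball_lt_top.ne

lemma vol_closedBall {d : ℕ} (hd : 1 ≤ d) (y : EuclideanSpace ℝ (Fin d)) {r : ℝ} (hr : 0 ≤ r) :
    MeasureTheory.volume (Metric.closedBall y r)
      = ENNReal.ofReal (r ^ d) * MeasureTheory.volume (Metric.ball (0 : EuclideanSpace ℝ (Fin d)) 1) := by
  haveI : Nonempty (Fin d) := ⟨⟨0, hd⟩⟩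
  rw [MeasureTheory.Measure.addHaar_closedBall _ y hr, finrank_euclideanSpace_fin]

lemma density_bound {d : ℕ} (hd : 1 ≤ d) (f₀ : EuclideanSpace ℝ (Fin d) → ℝ)
    (hcont : Continuous f₀)
    (y : EuclideanSpace ℝ (Fin d)) {a b r : ℝ} (hr : 0 ≤ r) (ha : 0 ≤ a)
    (hlb : ∀ z ∈ Metric.closedBall y r, a ≤ f₀ z)
    (hub : ∀ z ∈ Metric.closedBall y r, f₀ z ≤ b) :
    a * (r ^ d * Vb d)
      ≤ ((MeasureTheory.volume.withDensity (fun z => ENNReal.ofReal (f₀ z)))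
          (Metric.closedBall y r)).toReal
    ∧ ((MeasureTheory.volume.withDensity (fun z => ENNReal.ofReal (f₀ z)))
          (Metric.closedBall y r)).toReal ≤ b * (r ^ d * Vb d) := by
  haveI : Nonempty (Fin d) := ⟨⟨0, hd⟩⟩
  have hb : 0 ≤ b := le_trans (ha.trans (hlb y (Metric.mem_closedBall_self hr)))
    (hub y (Metric.mem_closedBall_self hr))
  have hmeasball : MeasurableSet (Metric.closedBall y r) := measurableSet_closedBall
  have happ : (MeasureTheory.volume.withDensity (fun z => ENNReal.ofReal (f₀ z)))
      (Metric.closedBall y r) = ∫⁻ z in Metric.closedBall y r, ENNReal.ofReal (f₀ z) := by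
    rw [withDensity_apply _ hmeasball]
  have hvol := vol_closedBall hd y hr
  have hballtop : MeasureTheory.volume (Metric.ball (0 : EuclideanSpace ℝ (Fin d)) 1) ≠ ⊤ :=
    measure_ball_lt_top.ne
  have hub' : (MeasureTheory.volume.withDensity (fun z => ENNReal.ofReal (f₀ z)))
      (Metric.closedBall y r) ≤ ENNReal.ofReal b * (ENNReal.ofReal (r ^ d) *
        MeasureTheory.volume (Metric.ball (0 : EuclideanSpace ℝ (Fin d)) 1)) := by
    rw [happ, ← hvol]
    calc ∫⁻ z in Metric.closedBall y r, ENNReal.ofReal (f₀ z)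
        ≤ ∫⁻ _ in Metric.closedBall y r, ENNReal.ofReal b :=
          setLIntegral_mono measurable_const (fun z hz => ENNReal.ofReal_le_ofReal (hub z hz))
      _ = ENNReal.ofReal b * MeasureTheory.volume (Metric.closedBall y r) :=
          setLIntegral_const _ _
  have hlb' : ENNReal.ofReal a * (ENNReal.ofReal (r ^ d) *
        MeasureTheory.volume (Metric.ball (0 : EuclideanSpace ℝ (Fin d)) 1))
      ≤ (MeasureTheory.volume.withDensity (fun z => ENNReal.ofReal (f₀ z)))
          (Metric.closedBall y r) := by
    rw [happ, ← hvol]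
    calc ENNReal.ofReal a * MeasureTheory.volume (Metric.closedBall y r)
        = ∫⁻ _ in Metric.closedBall y r, ENNReal.ofReal a := (setLIntegral_const _ _).symm
      _ ≤ ∫⁻ z in Metric.closedBall y r, ENNReal.ofReal (f₀ z) :=
          setLIntegral_mono (ENNReal.measurable_ofReal.comp hcont.measurable)
            (fun z hz => ENNReal.ofReal_le_ofReal (hlb z hz))
  constructor
  · calc a * (r ^ d * Vb d)
        = (ENNReal.ofReal a * (ENNReal.ofReal (r ^ d) *
            MeasureTheory.volume (Metric.ball (0 : EuclideanSpace ℝ (Fin d)) 1))).toReal := by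
          rw [ENNReal.toReal_mul, ENNReal.toReal_mul, ENNReal.toReal_ofReal ha,
            ENNReal.toReal_ofReal (by positivity)]
          rfl
      _ ≤ _ := by
          apply ENNReal.toReal_mono _ hlb'
          exact (lt_of_le_of_lt hub' (by
            exact ENNReal.mul_lt_top ENNReal.ofReal_lt_top
              (ENNReal.mul_lt_top ENNReal.ofReal_lt_top hballtop.lt_top))).ne
  · calc ((MeasureTheory.volume.withDensity (fun z => ENNReal.ofReal (f₀ z)))
          (Metric.closedBall y r)).toReal
        ≤ (ENNReal.ofReal b * (ENNReal.ofReal (r ^ d) *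
            MeasureTheory.volume (Metric.ball (0 : EuclideanSpace ℝ (Fin d)) 1))).toReal := by
          apply ENNReal.toReal_mono _ hub'
          exact (ENNReal.mul_lt_top ENNReal.ofReal_lt_top
            (ENNReal.mul_lt_top ENNReal.ofReal_lt_top hballtop.lt_top)).ne
      _ = b * (r ^ d * Vb d) := by
          rw [ENNReal.toReal_mul, ENNReal.toReal_mul, ENNReal.toReal_ofReal hb,
            ENNReal.toReal_ofReal (by positivity)]
          rfl


lemma sum_indicator_count {α : Type*} [PseudoMetricSpace α] (y : α) (Z : ℕ → α) (N : ℕ) (r : ℝ) :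
    ∑ i ∈ Finset.range N, (Metric.closedBall y r).indicator (fun _ => (1:ℝ)) (Z i)
      = ((Finset.range N).filter (fun i => dist y (Z i) ≤ r)).card := by
  rw [Finset.card_filter]
  push_cast
  refine Finset.sum_congr rfl (fun i _ => ?_)
  by_cases h : dist y (Z i) ≤ r <;>
    simp [Set.indicator_apply, Metric.mem_closedBall, dist_comm, h]

lemma alg_minus (n kr v c dl dq : ℝ) (hn : n ≠ 0) (hv : v ≠ 0) (hc : c ≠ 0) :
    n * ((c - dq * c) * ((dl * (kr / n / (v * c))) * v)) = (1 - dq) * dl * kr := by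
  field_simp

lemma alg_plus (n kr v c dl dq : ℝ) (hn : n ≠ 0) (hv : v ≠ 0) (hc : c ≠ 0) :
    n * ((c + dq * c) * ((dl * (kr / n / (v * c))) * v)) = (1 + dq) * dl * kr := by
  field_simp

set_option maxHeartbeats 2000000 in
lemma knn_log_tendsto {Ω : Type*} [MeasurableSpace Ω] (P : Measure Ω) [IsProbabilityMeasure P]
    {d : ℕ} (hd : 1 ≤ d) (f₀ : EuclideanSpace ℝ (Fin d) → ℝ)
    (hcont : Continuous f₀)
    (y : EuclideanSpace ℝ (Fin d)) (hy : 0 < f₀ y)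
    (X : ℕ → Ω → EuclideanSpace ℝ (Fin d)) (hmeas : ∀ i, Measurable (X i))
    (hindep : iIndepFun X P)
    (hdist : ∀ i, P.map (X i)
      = MeasureTheory.volume.withDensity (fun z => ENNReal.ofReal (f₀ z)))
    (k : ℕ → ℕ) (hk_top : Tendsto k atTop atTop)
    (hk_ratio : Tendsto (fun N => (k N : ℝ) / N) atTop (𝓝 0))
    {ε : ℝ} (hε : 0 < ε) :
    Tendsto (fun N => P {ω | ε ≤ |(d : ℝ) * Real.log (knnDist (k N) N y (fun i => X i ω))
        - Real.log ((k N : ℝ) / N) + Real.log (Vb d * f₀ y)|}) atTop (𝓝 0) := by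
  have hV : 0 < Vb d := Vb_pos hd
  have hdR : (0:ℝ) < d := by exact_mod_cast hd
  -- choice of δ
  have hexp1 : (1:ℝ) < Real.exp ε := by
    have := Real.add_one_le_exp ε; linarith
  have hexp2 : Real.exp (-ε) < 1 := by
    have h1 : Real.exp (-ε) * Real.exp ε = 1 := by
      rw [← Real.exp_add]; simp
    nlinarith [Real.exp_pos (-ε)]
  set δ : ℝ := min (1/2) (min ((Real.exp ε - 1)/2) ((1 - Real.exp (-ε))/2)) with hδdef
  have hδpos : 0 < δ := by
    apply lt_min (by norm_num)
    exact lt_min (by linarith) (by linarith)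
  have hδhalf : δ ≤ 1/2 := min_le_left _ _
  have hδc1 : (1 + δ/2) ≤ (1 - δ/4) * (1 + δ) := by nlinarith
  have hδc2 : (1 + δ/4) * (1 + δ) ≤ 3 := by nlinarith
  have hδc3 : (1 + δ/4) * (1 - δ) ≤ 1 - δ/2 := by nlinarith
  have hδa : 1 + δ < Real.exp ε := by
    have : δ ≤ (Real.exp ε - 1)/2 := le_trans (min_le_right _ _) (min_le_left _ _)
    linarith
  have hδb : Real.exp (-ε) < 1 - δ := by
    have : δ ≤ (1 - Real.exp (-ε))/2 := le_trans (min_le_right _ _) (min_le_right _ _)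
    linarith
  have hlog1 : Real.log (1 + δ) < ε := (Real.log_lt_iff_lt_exp (by linarith)).2 hδa
  have hlog2 : -ε < Real.log (1 - δ) := (Real.lt_log_iff_exp_lt (by linarith)).2 hδb
  clear_value δ
  clear hδdef hexp1 hexp2 hδa hδb
  -- continuity radius
  obtain ⟨ρ₀, hρ₀, hρ₀'⟩ := Metric.continuousAt_iff.1 (hcont.continuousAt (x := y))
    (δ/4 * f₀ y) (by positivity)
  set ρ : ℝ := ρ₀ / 2 with hρdef
  have hρ : 0 < ρ := by positivity
  have hfb : ∀ z ∈ Metric.closedBall y ρ,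
      f₀ y - δ/4 * f₀ y ≤ f₀ z ∧ f₀ z ≤ f₀ y + δ/4 * f₀ y := by
    intro z hz
    rw [Metric.mem_closedBall] at hz
    have h1 : dist z y < ρ₀ := by rw [hρdef] at hz; linarith
    have h2 := hρ₀' h1
    rw [Real.dist_eq] at h2
    have := abs_lt.1 h2
    exact ⟨by linarith [this.1], by linarith [this.2]⟩
  clear hρ₀'
  clear_value ρ
  -- density bounds on [0, ρ]
  have hpbound : ∀ r : ℝ, 0 ≤ r → r ≤ ρ →
      (f₀ y - δ/4 * f₀ y) * (r ^ d * Vb d)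
        ≤ ((MeasureTheory.volume.withDensity (fun z => ENNReal.ofReal (f₀ z)))
            (Metric.closedBall y r)).toReal ∧
      ((MeasureTheory.volume.withDensity (fun z => ENNReal.ofReal (f₀ z)))
            (Metric.closedBall y r)).toReal
        ≤ (f₀ y + δ/4 * f₀ y) * (r ^ d * Vb d) := by
    intro r hr hrρ
    refine density_bound hd f₀ hcont y hr (by nlinarith) ?_ ?_
    · exact fun z hz => (hfb z (Metric.closedBall_subset_closedBall hrρ hz)).1
    · exact fun z hz => (hfb z (Metric.closedBall_subset_closedBall hrρ hz)).2
  -- q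
  have hq0 : Tendsto (fun N => (k N : ℝ) / N / (Vb d * f₀ y)) atTop (𝓝 0) := by
    have := hk_ratio.div_const (Vb d * f₀ y)
    simpa using this
  -- eventually facts
  have ev1 : ∀ᶠ N in atTop, 1 ≤ k N := hk_top.eventually_ge_atTop 1
  have ev2 : ∀ᶠ N in atTop, k N ≤ N := by
    filter_upwards [hk_ratio.eventually_lt_const one_pos, eventually_ge_atTop 1] with N h1 h2
    by_contra hcon
    push_neg at hcon
    have hNpos : (0:ℝ) < N := by exact_mod_cast h2
    rw [div_lt_one hNpos] at h1
    have : (N:ℝ) < k N := by exact_mod_cast hcon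
    linarith
  have ev3 : ∀ᶠ N in atTop, (1 + δ) * ((k N : ℝ) / N / (Vb d * f₀ y)) ≤ ρ ^ d := by
    have h0 : Tendsto (fun N => (1 + δ) * ((k N : ℝ) / N / (Vb d * f₀ y))) atTop (𝓝 0) := by
      simpa using hq0.const_mul (1 + δ)
    filter_upwards [h0.eventually_lt_const (by positivity : (0:ℝ) < ρ ^ d)] with N hN using hN.le
  have ev4 : ∀ᶠ N in atTop, 1 ≤ N := eventually_ge_atTop 1
  -- RHS tendsto
  have hkR : Tendsto (fun N => (k N : ℝ)) atTop atTop :=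
    tendsto_natCast_atTop_atTop.comp hk_top
  have hRHS : Tendsto (fun N => ENNReal.ofReal (12 / (δ^2 * (k N : ℝ)))
      + ENNReal.ofReal (4 / (δ^2 * (k N : ℝ)))) atTop (𝓝 0) := by
    have h12 : Tendsto (fun N => 12 / (δ^2 * (k N : ℝ))) atTop (𝓝 0) := by
      have he : (fun N => 12 / (δ^2 * (k N : ℝ))) = fun N => (12 / δ^2) / (k N : ℝ) := by
        funext N; rw [div_div]
      rw [he]
      exact Tendsto.div_atTop tendsto_const_nhds hkR
    have h4 : Tendsto (fun N => 4 / (δ^2 * (k N : ℝ))) atTop (𝓝 0) := by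
      have he : (fun N => 4 / (δ^2 * (k N : ℝ))) = fun N => (4 / δ^2) / (k N : ℝ) := by
        funext N; rw [div_div]
      rw [he]
      exact Tendsto.div_atTop tendsto_const_nhds hkR
    have := (ENNReal.tendsto_ofReal h12).add (ENNReal.tendsto_ofReal h4)
    simpa using this
  refine tendsto_of_tendsto_of_tendsto_of_le_of_le' tendsto_const_nhds hRHS
    (Eventually.of_forall (fun N => zero_le)) ?_
  filter_upwards [ev1, ev2, ev3, ev4] with N hk1 hkN hqρ hN1
  -- main estimate for a single N
  have hKr1 : (1:ℝ) ≤ (k N : ℝ) := by exact_mod_cast hk1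
  have hNpos : (0:ℝ) < N := by exact_mod_cast hN1
  have hqpos : 0 < (k N : ℝ) / N / (Vb d * f₀ y) :=
    div_pos (div_pos (by linarith) hNpos) (by positivity)
  set A : ℝ := (1 + δ) * ((k N : ℝ) / N / (Vb d * f₀ y)) with hAdef
  set B : ℝ := (1 - δ) * ((k N : ℝ) / N / (Vb d * f₀ y)) with hBdef
  have hApos : 0 < A := by rw [hAdef]; positivity
  have hBpos : 0 < B := by
    rw [hBdef]
    have h1δ : 0 < 1 - δ := by linarith
    positivity
  have hBA : B ≤ A := by
    rw [hAdef, hBdef]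
    nlinarith
  clear_value A B
  set rp : ℝ := A ^ (1/(d:ℝ)) with hrpdef
  set rm : ℝ := B ^ (1/(d:ℝ)) with hrmdef
  have hrp_pos : 0 < rp := Real.rpow_pos_of_pos hApos _
  have hrm_pos : 0 < rm := Real.rpow_pos_of_pos hBpos _
  have hdne : (d:ℝ) ≠ 0 := by positivity
  have hrpd : rp ^ d = A := by
    rw [hrpdef, ← Real.rpow_natCast (A ^ (1/(d:ℝ))) d, ← Real.rpow_mul hApos.le,
      one_div_mul_cancel hdne, Real.rpow_one]
  have hrmd : rm ^ d = B := by
    rw [hrmdef, ← Real.rpow_natCast (B ^ (1/(d:ℝ))) d, ← Real.rpow_mul hBpos.le,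
      one_div_mul_cancel hdne, Real.rpow_one]
  have hrp_le_ρ : rp ≤ ρ := by
    have h1 : rp ≤ (ρ ^ d) ^ (1/(d:ℝ)) :=
      Real.rpow_le_rpow hApos.le hqρ (by positivity)
    have h2 : (ρ ^ d) ^ (1/(d:ℝ)) = ρ := by
      rw [← Real.rpow_natCast ρ d, ← Real.rpow_mul hρ.le, mul_one_div,
        div_self hdne, Real.rpow_one]
    rwa [h2] at h1
  have hrm_le_rp : rm ≤ rp :=
    Real.rpow_le_rpow hBpos.le hBA (by positivity)
  clear_value rp rm
  -- log computations
  have hlogq : Real.log ((k N : ℝ) / N / (Vb d * f₀ y))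
      = Real.log ((k N : ℝ) / N) - Real.log (Vb d * f₀ y) :=
    Real.log_div (ne_of_gt (div_pos (by linarith) hNpos)) (ne_of_gt (mul_pos hV hy))
  have hlogA : Real.log A = Real.log (1 + δ) + Real.log ((k N : ℝ) / N / (Vb d * f₀ y)) := by
    rw [hAdef]
    exact Real.log_mul (ne_of_gt (by linarith : (0:ℝ) < 1 + δ)) hqpos.ne'
  have hlogB : Real.log B = Real.log (1 - δ) + Real.log ((k N : ℝ) / N / (Vb d * f₀ y)) := by
    rw [hBdef]
    exact Real.log_mul (ne_of_gt (by linarith : (0:ℝ) < 1 - δ)) hqpos.ne'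
  have hdlogrp : (d:ℝ) * Real.log rp = Real.log A := by
    rw [← hrpd, Real.log_pow]
  have hdlogrm : (d:ℝ) * Real.log rm = Real.log B := by
    rw [← hrmd, Real.log_pow]
  -- the algebraic identities
  have hNA : (N:ℝ) * ((f₀ y - δ/4 * f₀ y) * (A * Vb d)) = (1 - δ/4) * (1 + δ) * (k N : ℝ) := by
    rw [hAdef]
    exact alg_minus N (k N : ℝ) (Vb d) (f₀ y) (1 + δ) (δ/4) hNpos.ne' hV.ne' hy.ne'
  have hNA' : (N:ℝ) * ((f₀ y + δ/4 * f₀ y) * (A * Vb d)) = (1 + δ/4) * (1 + δ) * (k N : ℝ) := by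
    rw [hAdef]
    exact alg_plus N (k N : ℝ) (Vb d) (f₀ y) (1 + δ) (δ/4) hNpos.ne' hV.ne' hy.ne'
  have hNB' : (N:ℝ) * ((f₀ y + δ/4 * f₀ y) * (B * Vb d)) = (1 + δ/4) * (1 - δ) * (k N : ℝ) := by
    rw [hBdef]
    exact alg_plus N (k N : ℝ) (Vb d) (f₀ y) (1 - δ) (δ/4) hNpos.ne' hV.ne' hy.ne'
  have hpb_p := hpbound rp hrp_pos.le hrp_le_ρ
  have hpb_m := hpbound rm hrm_pos.le (le_trans hrm_le_rp hrp_le_ρ)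
  rw [hrpd] at hpb_p
  rw [hrmd] at hpb_m
  set pp : ℝ := ((MeasureTheory.volume.withDensity (fun z => ENNReal.ofReal (f₀ z)))
    (Metric.closedBall y rp)).toReal with hppdef
  set pm : ℝ := ((MeasureTheory.volume.withDensity (fun z => ENNReal.ofReal (f₀ z)))
    (Metric.closedBall y rm)).toReal with hpmdef
  clear_value pp pm
  have hNp_lb : (1 + δ/2) * (k N : ℝ) ≤ (N:ℝ) * pp := by
    have h1 := mul_le_mul_of_nonneg_left hpb_p.1 hNpos.le
    rw [hNA] at h1
    calc (1 + δ/2) * (k N : ℝ) ≤ (1 - δ/4) * (1 + δ) * (k N : ℝ) :=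
          mul_le_mul_of_nonneg_right hδc1 (by positivity)
      _ ≤ (N:ℝ) * pp := h1
  have hNp_ub : (N:ℝ) * pp ≤ 3 * (k N : ℝ) := by
    have h1 := mul_le_mul_of_nonneg_left hpb_p.2 hNpos.le
    rw [hNA'] at h1
    calc (N:ℝ) * pp ≤ (1 + δ/4) * (1 + δ) * (k N : ℝ) := h1
      _ ≤ 3 * (k N : ℝ) := by
          exact mul_le_mul_of_nonneg_right hδc2 (by positivity)
  have hNm_ub : (N:ℝ) * pm ≤ (1 - δ/2) * (k N : ℝ) := by
    have h1 := mul_le_mul_of_nonneg_left hpb_m.2 hNpos.le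
    rw [hNB'] at h1
    calc (N:ℝ) * pm ≤ (1 + δ/4) * (1 - δ) * (k N : ℝ) := h1
      _ ≤ (1 - δ/2) * (k N : ℝ) := mul_le_mul_of_nonneg_right hδc3 (by positivity)
  clear hpb_p hpb_m hpbound hfb
  have hpm_nn : (0:ℝ) ≤ pm := by rw [hpmdef]; exact ENNReal.toReal_nonneg
  have hNm_nn : 0 ≤ (N:ℝ) * pm := mul_nonneg hNpos.le hpm_nn
  -- Chebyshev
  have ht : (0:ℝ) < δ/2 * (k N : ℝ) := by positivity
  have hchebp := cheb_indicator P X hmeas hindep _ hdist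
    (Metric.closedBall y rp) measurableSet_closedBall N ht
  have hchebm := cheb_indicator P X hmeas hindep _ hdist
    (Metric.closedBall y rm) measurableSet_closedBall N ht
  rw [← hppdef] at hchebp
  rw [← hpmdef] at hchebm
  clear hppdef hpmdef
  -- set inclusion
  have hincl : {ω | ε ≤ |(d : ℝ) * Real.log (knnDist (k N) N y (fun i => X i ω))
        - Real.log ((k N : ℝ) / N) + Real.log (Vb d * f₀ y)|}
      ⊆ {ω | δ/2 * (k N : ℝ) ≤ |(∑ i ∈ Finset.range N,
            (Metric.closedBall y rp).indicator (fun _ => (1:ℝ)) (X i ω)) - N * pp|}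
        ∪ {ω | δ/2 * (k N : ℝ) ≤ |(∑ i ∈ Finset.range N,
            (Metric.closedBall y rm).indicator (fun _ => (1:ℝ)) (X i ω)) - N * pm|} := by
    intro ω hω
    simp only [Set.mem_setOf_eq] at hω
    by_contra hcon
    simp only [Set.mem_union, Set.mem_setOf_eq, not_or, not_le] at hcon
    obtain ⟨hc1, hc2⟩ := hcon
    rw [sum_indicator_count y (fun i => X i ω) N rp] at hc1
    rw [sum_indicator_count y (fun i => X i ω) N rm] at hc2
    have habs1 := abs_lt.1 hc1
    have habs2 := abs_lt.1 hc2
    -- R ≤ rp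
    have hcp : ((k N : ℝ)) ≤ (((Finset.range N).filter
        (fun i => dist y (X i ω) ≤ rp)).card : ℝ) := by linarith [habs1.1, hNp_lb]
    have hcpN : k N ≤ ((Finset.range N).filter (fun i => dist y (X i ω) ≤ rp)).card := by
      exact_mod_cast hcp
    have hRle : knnDist (k N) N y (fun i => X i ω) ≤ rp :=
      (knnDist_le_iff (k N) N y (fun i => X i ω) hkN hrp_pos.le).2 hcpN
    -- rm < R
    have hcm : ((((Finset.range N).filter
        (fun i => dist y (X i ω) ≤ rm)).card : ℝ)) < (k N : ℝ) := by linarith [habs2.2, hNm_ub]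
    have hcmN : ((Finset.range N).filter (fun i => dist y (X i ω) ≤ rm)).card < k N := by
      exact_mod_cast hcm
    have hRgt : rm < knnDist (k N) N y (fun i => X i ω) := by
      by_contra hcon2
      push_neg at hcon2
      have := (knnDist_le_iff (k N) N y (fun i => X i ω) hkN hrm_pos.le).1 hcon2
      omega
    have hRpos : 0 < knnDist (k N) N y (fun i => X i ω) := lt_trans hrm_pos hRgt
    have hub : (d:ℝ) * Real.log (knnDist (k N) N y (fun i => X i ω)) ≤ Real.log A := by
      rw [← hdlogrp]
      have hlexp := (Real.log_le_log_iff hRpos hrp_pos).2 hRle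
      exact mul_le_mul_of_nonneg_left hlexp hdR.le
    have hlb : Real.log B ≤ (d:ℝ) * Real.log (knnDist (k N) N y (fun i => X i ω)) := by
      rw [← hdlogrm]
      have hlexp := (Real.log_le_log_iff hrm_pos hRpos).2 hRgt.le
      exact mul_le_mul_of_nonneg_left hlexp hdR.le
    rw [hlogA, hlogq] at hub
    rw [hlogB, hlogq] at hlb
    have hT : |(d : ℝ) * Real.log (knnDist (k N) N y (fun i => X i ω))
        - Real.log ((k N : ℝ) / N) + Real.log (Vb d * f₀ y)| < ε := by
      rw [abs_lt]
      exact ⟨by linarith, by linarith⟩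
    exact absurd hω (not_le.2 hT)
  -- combine
  calc P {ω | ε ≤ |(d : ℝ) * Real.log (knnDist (k N) N y (fun i => X i ω))
        - Real.log ((k N : ℝ) / N) + Real.log (Vb d * f₀ y)|}
      ≤ P ({ω | δ/2 * (k N : ℝ) ≤ |(∑ i ∈ Finset.range N,
            (Metric.closedBall y rp).indicator (fun _ => (1:ℝ)) (X i ω)) - N * pp|}
        ∪ {ω | δ/2 * (k N : ℝ) ≤ |(∑ i ∈ Finset.range N,
            (Metric.closedBall y rm).indicator (fun _ => (1:ℝ)) (X i ω)) - N * pm|}) :=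
        measure_mono hincl
    _ ≤ P {ω | δ/2 * (k N : ℝ) ≤ |(∑ i ∈ Finset.range N,
            (Metric.closedBall y rp).indicator (fun _ => (1:ℝ)) (X i ω)) - N * pp|}
        + P {ω | δ/2 * (k N : ℝ) ≤ |(∑ i ∈ Finset.range N,
            (Metric.closedBall y rm).indicator (fun _ => (1:ℝ)) (X i ω)) - N * pm|} :=
        measure_union_le _ _
    _ ≤ ENNReal.ofReal ((N:ℝ) * pp / (δ/2 * (k N : ℝ))^2)
        + ENNReal.ofReal ((N:ℝ) * pm / (δ/2 * (k N : ℝ))^2) :=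
        add_le_add hchebp hchebm
    _ ≤ ENNReal.ofReal (12 / (δ^2 * (k N : ℝ)))
        + ENNReal.ofReal (4 / (δ^2 * (k N : ℝ))) := by
        apply add_le_add <;> apply ENNReal.ofReal_le_ofReal
        · rw [div_le_div_iff₀ (by positivity) (by positivity)]
          calc (N:ℝ) * pp * (δ^2 * (k N : ℝ))
              ≤ (3 * (k N : ℝ)) * (δ^2 * (k N : ℝ)) :=
                mul_le_mul_of_nonneg_right hNp_ub (by positivity)
            _ = 12 * (δ/2 * (k N : ℝ))^2 := by ring
        · rw [div_le_div_iff₀ (by positivity) (by positivity)]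
          calc (N:ℝ) * pm * (δ^2 * (k N : ℝ))
              ≤ ((1 - δ/2) * (k N : ℝ)) * (δ^2 * (k N : ℝ)) :=
                mul_le_mul_of_nonneg_right hNm_ub (by positivity)
            _ ≤ (1 * (k N : ℝ)) * (δ^2 * (k N : ℝ)) := by
                apply mul_le_mul_of_nonneg_right _ (by positivity)
                exact mul_le_mul_of_nonneg_right (by linarith) (by positivity)
            _ = 4 * (δ/2 * (k N : ℝ))^2 := by ring

set_option maxHeartbeats 2000000 in
/-- Theorem 1 of the paper: For a bounded continuous density `f₀`, a
uniform anomaly density `f₁` equal to `c > 0` on a bounded region containing `x` and `x'`,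
and points `x, x'` with `f₀ x, f₀ x' > 0`, the ODIT evidence
`d (log g_k^N(x) − log g_k^N(x'))` converges in probability to `log f₀ x' − log f₀ x`;
if moreover `f₀ x' = c` then this limit equals `log (f₁ x / f₀ x)`. -/
theorem stmt_14
    {Ω : Type*} [MeasurableSpace Ω] (P : Measure Ω) [IsProbabilityMeasure P]
    {d : ℕ} (hd : 1 ≤ d)
    (f₀ : EuclideanSpace ℝ (Fin d) → ℝ)
    (hf₀_nonneg : ∀ z, 0 ≤ f₀ z) (hf₀_cont : Continuous f₀)
    (hf₀_bdd : ∃ Cb : ℝ, ∀ z, f₀ z ≤ Cb)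
    (hf₀_dens : MeasureTheory.volume.withDensity (fun z => ENNReal.ofReal (f₀ z)) Set.univ = 1)
    (U : Set (EuclideanSpace ℝ (Fin d))) (hU_meas : MeasurableSet U)
    (hU_bdd : Bornology.IsBounded U)
    (c : ℝ) (hc : 0 < c)
    (f₁ : EuclideanSpace ℝ (Fin d) → ℝ)
    (hf₁_unif : ∀ z ∈ U, f₁ z = c)
    (hf₁_dens : MeasureTheory.volume.withDensity (fun z => ENNReal.ofReal (f₁ z)) Set.univ = 1)
    (x x' : EuclideanSpace ℝ (Fin d)) (hxU : x ∈ U) (hx'U : x' ∈ U)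
    (hx_pos : 0 < f₀ x) (hx'_pos : 0 < f₀ x')
    (X : ℕ → Ω → EuclideanSpace ℝ (Fin d)) (hmeas : ∀ i, Measurable (X i))
    (hindep : iIndepFun X P)
    (hdist : ∀ i, P.map (X i)
      = MeasureTheory.volume.withDensity (fun z => ENNReal.ofReal (f₀ z)))
    (k : ℕ → ℕ) (hk_top : Tendsto k atTop atTop)
    (hk_ratio : Tendsto (fun N => (k N : ℝ) / N) atTop (𝓝 0)) :
    TendstoInMeasure P
      (fun N ω => (d : ℝ) * (Real.log (knnDist (k N) N x (fun i => X i ω))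
          - Real.log (knnDist (k N) N x' (fun i => X i ω))))
      atTop (fun _ => Real.log (f₀ x') - Real.log (f₀ x))
    ∧ (f₀ x' = c →
        Real.log (f₀ x') - Real.log (f₀ x) = Real.log (f₁ x / f₀ x)) := by
  have hVpos : 0 < Vb d := Vb_pos hd
  constructor
  · rw [tendstoInMeasure_iff_dist]
    intro ε hε
    have hε2 : 0 < ε / 2 := half_pos hε
    have hkey_x := knn_log_tendsto P hd f₀ hf₀_cont x hx_pos X hmeas hindep hdist
      k hk_top hk_ratio hε2
    have hkey_x' := knn_log_tendsto P hd f₀ hf₀_cont x' hx'_pos X hmeas hindep hdist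
      k hk_top hk_ratio hε2
    refine tendsto_of_tendsto_of_tendsto_of_le_of_le tendsto_const_nhds
      (by simpa using hkey_x.add hkey_x') (fun N => zero_le) (fun N => ?_)
    refine le_trans (measure_mono ?_) (measure_union_le _ _)
    intro ω hω
    simp only [Set.mem_setOf_eq] at hω
    rw [Real.dist_eq] at hω
    have hid : (d : ℝ) * (Real.log (knnDist (k N) N x (fun i => X i ω))
          - Real.log (knnDist (k N) N x' (fun i => X i ω)))
        - (Real.log (f₀ x') - Real.log (f₀ x))
      = ((d : ℝ) * Real.log (knnDist (k N) N x (fun i => X i ω))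
          - Real.log ((k N : ℝ) / N) + Real.log (Vb d * f₀ x))
        - ((d : ℝ) * Real.log (knnDist (k N) N x' (fun i => X i ω))
          - Real.log ((k N : ℝ) / N) + Real.log (Vb d * f₀ x')) := by
      rw [Real.log_mul hVpos.ne' hx_pos.ne', Real.log_mul hVpos.ne' hx'_pos.ne']
      ring
    rw [hid] at hω
    by_contra hcon
    simp only [Set.mem_union, Set.mem_setOf_eq, not_or, not_le] at hcon
    obtain ⟨h1, h2⟩ := hcon
    have := abs_sub ((d : ℝ) * Real.log (knnDist (k N) N x (fun i => X i ω))
          - Real.log ((k N : ℝ) / N) + Real.log (Vb d * f₀ x))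
      ((d : ℝ) * Real.log (knnDist (k N) N x' (fun i => X i ω))
          - Real.log ((k N : ℝ) / N) + Real.log (Vb d * f₀ x'))
    linarith
  · intro h
    rw [h, hf₁_unif x hxU, Real.log_div hc.ne' hx_pos.ne']
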